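/- For every real s ≥ 1, every integer N ≥ 1 and every index i ∈ {1,…,N} there exists a constant C > 0 such that for all functions v₁, …, v_N : ℤ → [0,∞): ( Σ_{k∈ℤ} ⟨k⟩^{2s} · ( Σ_{k₁+⋯+k_N = k} ⟨k⟩^{-1} · (max_{1≤j≤N} ⟨k_j⟩)^{-2} · Π_{l=1}^N v_l(k_l) )² )^{1/2} ≤ C · ( Σ_{k∈ℤ} ⟨k⟩^{2(s−3)} v_i(k)² )^{1/2} · Π_{l≠i} ( Σ_{k∈ℤ} ⟨k⟩^{2s} v_l(k)² )^{1/2}, where the inner sum ranges over all N-tuples (k₁,…,k_N) ∈ ℤ^N with k₁+⋯+k_N = k and all sums are interpreted in [0,∞]. -/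

import Mathlib

open scoped ENNReal NNReal BigOperators
open MeasureTheory

/-- The Japanese bracket `⟨k⟩ = (1+k²)^{1/2}`, as an extended nonnegative real. -/
noncomputable def J (k : ℤ) : ℝ≥0∞ := ENNReal.ofReal (Real.sqrt (1 + (k : ℝ) ^ 2))

lemma one_le_J (k : ℤ) : 1 ≤ J k := by
  rw [J]
  have h : Real.sqrt 1 ≤ Real.sqrt (1 + (k:ℝ)^2) :=
    Real.sqrt_le_sqrt (by nlinarith [sq_nonneg (k:ℝ)])
  rw [Real.sqrt_one] at h
  exact ENNReal.one_le_ofReal.2 h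

lemma J_ne_zero (k : ℤ) : J k ≠ 0 := by
  intro h
  have := one_le_J k
  rw [h] at this
  simp at this

lemma J_ne_top (k : ℤ) : J k ≠ ⊤ := ENNReal.ofReal_ne_top

lemma abs_le_of_J_le {a b : ℤ} (h : J a ≤ J b) : |a| ≤ |b| := by
  rw [J, J, ENNReal.ofReal_le_ofReal_iff (Real.sqrt_nonneg _)] at h
  rw [Real.sqrt_le_sqrt_iff (by positivity)] at h
  have h2 : (a:ℝ)^2 ≤ (b:ℝ)^2 := by linarith
  by_contra hc
  push_neg at hc
  have : (b:ℝ)^2 < (a:ℝ)^2 := by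
    have hc' : |(b:ℝ)| < |(a:ℝ)| := by
      have h1 : ((|b|:ℤ):ℝ) < ((|a|:ℤ):ℝ) := by exact_mod_cast hc
      rw [Int.cast_abs, Int.cast_abs] at h1; exact h1
    nlinarith [abs_nonneg (b:ℝ), sq_abs (a:ℝ), sq_abs (b:ℝ)]
  linarith

lemma J_le_mul (N : ℕ) (hN : 1 ≤ N) (k b : ℤ) (h : |k| ≤ (N:ℤ) * |b|) :
    J k ≤ (N : ℝ≥0∞) * J b := by
  rw [J, J]
  rw [show ((N:ℝ≥0∞)) = ENNReal.ofReal (N:ℝ) by simp, ← ENNReal.ofReal_mul (by positivity)]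
  apply ENNReal.ofReal_le_ofReal
  rw [show (N:ℝ) * Real.sqrt (1 + (b:ℝ)^2) = Real.sqrt ((N:ℝ)^2 * (1 + (b:ℝ)^2)) by
    rw [Real.sqrt_mul (by positivity), Real.sqrt_sq (by positivity)]]
  apply Real.sqrt_le_sqrt
  have hN' : (1:ℝ) ≤ (N:ℝ) := by exact_mod_cast hN
  have habs : |(k:ℝ)| ≤ (N:ℝ) * |(b:ℝ)| := by
    have : ((|k|:ℤ):ℝ) ≤ (((N:ℤ) * |b| : ℤ):ℝ) := by exact_mod_cast h
    rw [Int.cast_mul, Int.cast_abs, Int.cast_abs] at this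
    exact_mod_cast this
  nlinarith [sq_abs (k:ℝ), sq_abs (b:ℝ), abs_nonneg (k:ℝ), abs_nonneg (b:ℝ), sq_nonneg ((b:ℝ))]

lemma one_le_J_rpow (k : ℤ) {t : ℝ} (ht : 0 ≤ t) : 1 ≤ J k ^ t := by
  calc (1:ℝ≥0∞) = 1 ^ t := (ENNReal.one_rpow t).symm
  _ ≤ J k ^ t := ENNReal.rpow_le_rpow (one_le_J k) ht

lemma weight_bound (s : ℝ) (hs : 1 ≤ s) {N : ℕ} (hN : 1 ≤ N) (i j : Fin N) (p : Fin N → ℤ)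
    (hmax : ∀ l, J (p l) ≤ J (p j)) :
    J (∑ l, p l) ^ (s-1) * J (p j) ^ (-2:ℝ)
      ≤ (N:ℝ≥0∞) ^ (s-1) * (J (p i) ^ (s-3) * ∏ l ∈ Finset.univ.erase i, J (p l) ^ (s-1)) := by
  have hs1 : (0:ℝ) ≤ s - 1 := by linarith
  have hprod1 : (1:ℝ≥0∞) ≤ ∏ l ∈ Finset.univ.erase i, J (p l) ^ (s-1) :=
    Finset.one_le_prod' fun l _ => one_le_J_rpow _ hs1
  have hk : |∑ l, p l| ≤ (N:ℤ) * |p j| := by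
    calc |∑ l, p l| ≤ ∑ l, |p l| := Finset.abs_sum_le_sum_abs _ _
    _ ≤ ∑ _l : Fin N, |p j| := Finset.sum_le_sum fun l _ => abs_le_of_J_le (hmax l)
    _ = (N:ℤ) * |p j| := by simp [mul_comm]
  have h1 : J (∑ l, p l) ^ (s-1) ≤ (N:ℝ≥0∞) ^ (s-1) * J (p j) ^ (s-1) := by
    rw [← ENNReal.mul_rpow_of_nonneg _ _ hs1]
    exact ENNReal.rpow_le_rpow (J_le_mul N hN _ _ hk) hs1
  have key : J (p j) ^ (s-3) ≤ J (p i) ^ (s-3) * ∏ l ∈ Finset.univ.erase i, J (p l) ^ (s-1) := by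
    rcases le_or_gt s 3 with h3 | h3
    · have h₁ : J (p j) ^ (s-3) ≤ J (p i) ^ (s-3) := by
        rw [show s - 3 = -(3-s) by ring, ENNReal.rpow_neg, ENNReal.rpow_neg]
        exact ENNReal.inv_le_inv.2 (ENNReal.rpow_le_rpow (hmax i) (by linarith))
      exact h₁.trans (le_mul_of_one_le_right' hprod1)
    · by_cases hij : j = i
      · subst hij
        exact le_mul_of_one_le_right' hprod1
      · have h₁ : J (p j) ^ (s-3) ≤ J (p j) ^ (s-1) :=
          ENNReal.rpow_le_rpow_of_exponent_le (one_le_J _) (by linarith)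
        have h₂ : J (p j) ^ (s-1) ≤ ∏ l ∈ Finset.univ.erase i, J (p l) ^ (s-1) :=
          Finset.single_le_prod' (fun l _ => one_le_J_rpow _ hs1)
            (Finset.mem_erase.2 ⟨hij, Finset.mem_univ j⟩)
        exact (h₁.trans h₂).trans (le_mul_of_one_le_left' (one_le_J_rpow _ (by linarith)))
  calc J (∑ l, p l) ^ (s-1) * J (p j) ^ (-2:ℝ)
      ≤ ((N:ℝ≥0∞) ^ (s-1) * J (p j) ^ (s-1)) * J (p j) ^ (-2:ℝ) :=
        mul_le_mul_left h1 _
    _ = (N:ℝ≥0∞) ^ (s-1) * J (p j) ^ (s-3) := by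
        rw [mul_assoc, ← ENNReal.rpow_add _ _ (J_ne_zero _) (J_ne_top _)]
        ring_nf
    _ ≤ _ := mul_le_mul_right key _

lemma summable_inv_one_add_sq : Summable (fun m : ℤ => ((1:ℝ) + (m:ℝ)^2)⁻¹) := by
  have hnat : Summable (fun n : ℕ => ((1:ℝ) + (n:ℝ)^2)⁻¹) := by
    have base : Summable (fun n : ℕ => 1 / (n:ℝ)^2) :=
      Real.summable_one_div_nat_pow.mpr one_lt_two
    have h1 : Summable (fun n : ℕ => 1 / ((n + 1 : ℕ):ℝ)^2) :=
      (summable_nat_add_iff (f := fun n : ℕ => 1 / (n:ℝ)^2) 1).mpr base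
    refine Summable.of_nonneg_of_le (fun n => by positivity) (fun n => ?_) (h1.mul_left 2)
    have hn : (0:ℝ) < 1 + (n:ℝ)^2 := by positivity
    have hn2 : (0:ℝ) < ((n+1:ℕ):ℝ)^2 := by positivity
    rw [mul_one_div, inv_eq_one_div, div_le_div_iff₀ hn hn2]
    push_cast
    nlinarith [sq_nonneg ((n:ℝ) - 1)]
  refine Summable.of_nat_of_neg hnat ?_
  apply hnat.congr
  intro n
  norm_num

lemma S0_ne_top : (∑' m : ℤ, J m ^ (-2:ℝ)) ≠ ⊤ := by
  have key : ∀ m : ℤ, J m ^ (-2:ℝ) = ENNReal.ofReal (((1:ℝ) + (m:ℝ)^2)⁻¹) := by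
    intro m
    rw [J, ENNReal.ofReal_rpow_of_pos (by positivity)]
    congr 1
    rw [show (-2:ℝ) = (2:ℝ)*(-1) by norm_num, Real.rpow_mul (Real.sqrt_nonneg _),
      Real.rpow_two, Real.sq_sqrt (by positivity), Real.rpow_neg_one]
  rw [tsum_congr key, ← ENNReal.ofReal_tsum_of_nonneg (fun m => by positivity)
    summable_inv_one_add_sq]
  exact ENNReal.ofReal_ne_top

lemma tsum_mul_le_sqrt {α : Type*} [Countable α] (f g : α → ℝ≥0∞) :
    ∑' a, f a * g a ≤ (∑' a, f a ^ (2:ℕ)) ^ ((1:ℝ)/2) * (∑' a, g a ^ (2:ℕ)) ^ ((1:ℝ)/2) := by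
  letI : MeasurableSpace α := ⊤
  haveI : MeasurableSingletonClass α := ⟨fun _ => trivial⟩
  have h := ENNReal.lintegral_mul_le_Lp_mul_Lq (Measure.count : Measure α)
    (p := 2) (q := 2) ⟨by norm_num, by norm_num, by norm_num⟩ (f := f) (g := g) (measurable_from_top).aemeasurable
    (measurable_from_top).aemeasurable
  simp only [lintegral_count, Pi.mul_apply] at h
  have e2 : ∀ h : α → ℝ≥0∞, ∀ a, h a ^ (2:ℝ) = h a ^ (2:ℕ) := fun h a => by
    rw [← ENNReal.rpow_natCast]; norm_num
  calc ∑' a, f a * g a ≤ (∑' a, f a ^ (2:ℝ)) ^ ((1:ℝ)/2) * (∑' a, g a ^ (2:ℝ)) ^ ((1:ℝ)/2) := h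
  _ = _ := by rw [tsum_congr (e2 f), tsum_congr (e2 g)]

lemma tsum_pi_prod {ι : Type} [Fintype ι] (f : ι → ℤ → ℝ≥0∞) :
    ∑' p : ι → ℤ, ∏ l, f l (p l) = ∏ l, ∑' m, f l m := by
  classical
  revert f
  refine Fintype.induction_empty_option
    (P := fun α [Fintype α] => ∀ f : α → ℤ → ℝ≥0∞,
      ∑' p : α → ℤ, ∏ l, f l (p l) = ∏ l, ∑' m, f l m) ?_ ?_ ?_ ι
  · intro α β _ e IH f
    letI : Fintype α := Fintype.ofEquiv β e.symm
    calc ∑' p : β → ℤ, ∏ l, f l (p l)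
        = ∑' q : α → ℤ, ∏ l, f l ((Equiv.arrowCongr e (Equiv.refl ℤ)) q l) :=
          ((Equiv.arrowCongr e (Equiv.refl ℤ)).tsum_eq fun p => ∏ l, f l (p l)).symm
      _ = ∑' q : α → ℤ, ∏ m, f (e m) (q m) := by
          refine tsum_congr fun q => ?_
          rw [← Equiv.prod_comp e (fun l => f l ((Equiv.arrowCongr e (Equiv.refl ℤ)) q l))]
          refine Finset.prod_congr rfl fun m _ => ?_
          simp [Equiv.arrowCongr]
      _ = ∏ m, ∑' k, f (e m) k := IH _
      _ = ∏ l, ∑' m, f l m := Equiv.prod_comp e (fun l => ∑' m, f l m)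
  · intro f
    have h1 : ∀ p : PEmpty → ℤ, ∏ l, f l (p l) = 1 := fun p => by simp
    rw [tsum_congr h1]
    haveI : Unique (PEmpty → ℤ) := ⟨⟨fun x => x.elim⟩, fun g => funext fun x => x.elim⟩
    rw [tsum_eq_single (default : PEmpty → ℤ) (fun b hb => absurd (Subsingleton.elim b _) hb)]
    simp
  · intro α _ IH f
    rw [← (Equiv.piOptionEquivProd (β := fun _ : Option α => ℤ)).symm.tsum_eq,
      ENNReal.tsum_prod']
    have key : ∀ (a : ℤ) (q : α → ℤ),
        (∏ l, f l ((Equiv.piOptionEquivProd (β := fun _ : Option α => ℤ)).symm (a, q) l))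
        = f none a * ∏ m, f (some m) (q m) := by
      intro a q
      rw [Fintype.prod_option]
      simp [Equiv.piOptionEquivProd]
    simp_rw [key, ENNReal.tsum_mul_left, ENNReal.tsum_mul_right, IH, Fintype.prod_option]

lemma sq_half_rpow (x : ℝ≥0∞) : (x ^ ((1:ℝ)/2)) ^ (2:ℕ) = x := by
  rw [← ENNReal.rpow_natCast, ← ENNReal.rpow_mul]
  norm_num

/-- Multilinear smoothing estimate: the `⟨k⟩⁻¹⟨k_max⟩⁻²`-weighted convolution is bounded
in `l²_s` by `‖v_i‖_{H^{s-3}}` times the `H^s` norms of the other factors, for `s ≥ 1`. -/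
theorem multilinear_gain_estimate (s : ℝ) (hs : 1 ≤ s) (N : ℕ) (hN : 1 ≤ N) (i : Fin N) :
    ∃ C : ℝ, 0 < C ∧ ∀ v : Fin N → ℤ → ℝ≥0,
      (∑' k : ℤ, J k ^ (2 * s) *
          (∑' p : Fin N → ℤ, if (∑ j, p j) = k then
              J k ^ (-1 : ℝ) * (Finset.univ.sup fun j => J (p j)) ^ (-2 : ℝ) *
                ∏ l, (v l (p l) : ℝ≥0∞)
            else 0) ^ (2 : ℕ)) ^ ((1 : ℝ) / 2)
      ≤ ENNReal.ofReal C *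
          ((∑' k : ℤ, J k ^ (2 * (s - 3)) * (v i k : ℝ≥0∞) ^ (2 : ℕ)) ^ ((1 : ℝ) / 2) *
            ∏ l ∈ Finset.univ.erase i,
              (∑' k : ℤ, J k ^ (2 * s) * (v l k : ℝ≥0∞) ^ (2 : ℕ)) ^ ((1 : ℝ) / 2)) := by
  classical
  have hs1 : (0:ℝ) ≤ s - 1 := by linarith
  set K : ℝ≥0∞ := (N:ℝ≥0∞) ^ (s-1) with hK
  set S0 : ℝ≥0∞ := ∑' m : ℤ, J m ^ (-2:ℝ) with hS0
  set S : ℝ≥0∞ := ∑' q : {j : Fin N // j ≠ i} → ℤ, ∏ l, J (q l) ^ (-2:ℝ) with hSdef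
  have hS_eq : S = ∏ _l : {j : Fin N // j ≠ i}, S0 :=
    tsum_pi_prod (fun _ m => J m ^ (-2:ℝ))
  have hS_ne_top : S ≠ ⊤ := by
    rw [hS_eq]
    exact (ENNReal.prod_lt_top (fun _ _ => S0_ne_top.lt_top)).ne
  have hK_ne_top : K ≠ ⊤ := ENNReal.rpow_ne_top_of_nonneg hs1 (by simp)
  have hKS_ne_top : K ^ (2:ℕ) * S ≠ ⊤ :=
    ENNReal.mul_ne_top (ENNReal.pow_ne_top hK_ne_top) hS_ne_top
  set T : ℝ≥0∞ := (K ^ (2:ℕ) * S) ^ ((1:ℝ)/2) with hT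
  have hT_ne_top : T ≠ ⊤ := ENNReal.rpow_ne_top_of_nonneg (by norm_num) hKS_ne_top
  refine ⟨T.toReal + 1, by positivity, fun v => ?_⟩
  have hTC : T ≤ ENNReal.ofReal (T.toReal + 1) := by
    rw [ENNReal.ofReal_add ENNReal.toReal_nonneg zero_le_one, ENNReal.ofReal_toReal hT_ne_top]
    simpa using le_self_add
  -- notation
  set g : Fin N → ℤ → ℝ≥0∞ :=
    fun l m => J m ^ (if l = i then s - 3 else s) * (v l m : ℝ≥0∞) with hg
  set D : Fin N → ℝ≥0∞ :=
    fun l => ∑' m : ℤ, J m ^ (2 * (if l = i then s - 3 else s)) * (v l m : ℝ≥0∞)^(2:ℕ) with hD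
  set Y : ℤ → ℝ≥0∞ :=
    fun k => ∑' p : Fin N → ℤ, if (∑ j, p j) = k then (∏ l, g l (p l))^(2:ℕ) else 0 with hY
  -- step: per-k estimate
  have main : ∀ k : ℤ, J k ^ (2*s) *
      (∑' p : Fin N → ℤ, if (∑ j, p j) = k then
        J k ^ (-1 : ℝ) * (Finset.univ.sup fun j => J (p j)) ^ (-2 : ℝ) *
          ∏ l, (v l (p l) : ℝ≥0∞) else 0) ^ (2:ℕ)
      ≤ (K ^ (2:ℕ) * S) * Y k := by
    intro k
    set A : (Fin N → ℤ) → ℝ≥0∞ :=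
      fun p => ∏ l ∈ Finset.univ.erase i, J (p l) ^ (-1:ℝ) with hA
    set x : (Fin N → ℤ) → ℝ≥0∞ := fun p => if (∑ j, p j) = k then A p else 0 with hx
    set y : (Fin N → ℤ) → ℝ≥0∞ :=
      fun p => if (∑ j, p j) = k then ∏ l, g l (p l) else 0 with hy
    -- h1 : rewrite LHS
    have hpow : J k ^ (2*s) = (J k ^ s)^(2:ℕ) := by
      rw [← ENNReal.rpow_natCast (J k ^ s) 2, ← ENNReal.rpow_mul]
      norm_num [mul_comm]
    have h1 : J k ^ (2*s) *
        (∑' p : Fin N → ℤ, if (∑ j, p j) = k then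
          J k ^ (-1 : ℝ) * (Finset.univ.sup fun j => J (p j)) ^ (-2 : ℝ) *
            ∏ l, (v l (p l) : ℝ≥0∞) else 0) ^ (2:ℕ)
        = (∑' p : Fin N → ℤ, if (∑ j, p j) = k then
            J k ^ (s-1) * (Finset.univ.sup fun j => J (p j)) ^ (-2 : ℝ) *
              ∏ l, (v l (p l) : ℝ≥0∞) else 0) ^ (2:ℕ) := by
      rw [hpow, ← mul_pow]
      congr 1
      rw [← ENNReal.tsum_mul_left]
      refine tsum_congr fun p => ?_
      by_cases hc : (∑ j, p j) = k
      · rw [if_pos hc, if_pos hc, ← mul_assoc, ← mul_assoc,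
          ← ENNReal.rpow_add s (-1) (J_ne_zero k) (J_ne_top k),
          show s + (-1) = s - 1 by ring]
      · rw [if_neg hc, if_neg hc, mul_zero]
    -- h2 : pointwise weight bound
    have h2 : ∀ p : Fin N → ℤ,
        (if (∑ j, p j) = k then
          J k ^ (s-1) * (Finset.univ.sup fun j => J (p j)) ^ (-2 : ℝ) *
            ∏ l, (v l (p l) : ℝ≥0∞) else 0) ≤ K * (x p * y p) := by
      intro p
      by_cases hc : (∑ j, p j) = k
      · have hxp : x p = A p := if_pos hc
        have hyp : y p = ∏ l, g l (p l) := if_pos hc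
        rw [if_pos hc, hxp, hyp]
        subst hc
        obtain ⟨j, -, hj⟩ := Finset.exists_mem_eq_sup (Finset.univ : Finset (Fin N))
          ⟨i, Finset.mem_univ i⟩ (fun j => J (p j))
        have hmax : ∀ l, J (p l) ≤ J (p j) := fun l => hj ▸ Finset.le_sup (f := fun j => J (p j)) (Finset.mem_univ l)
        rw [hj]
        have hw := weight_bound s hs hN i j p hmax
        have e1 : ∏ l, g l (p l) =
            (J (p i) ^ (s-3) * ∏ l ∈ Finset.univ.erase i, J (p l) ^ s) *
              ∏ l, (v l (p l) : ℝ≥0∞) := by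
          rw [hg]
          rw [Finset.prod_mul_distrib]
          congr 1
          rw [← Finset.mul_prod_erase Finset.univ
            (fun l => J (p l) ^ (if l = i then s-3 else s)) (Finset.mem_univ i)]
          congr 1
          · rw [if_pos rfl]
          · exact Finset.prod_congr rfl fun l hl => by
              rw [if_neg (Finset.mem_erase.1 hl).1]
        have e2 : A p * ∏ l ∈ Finset.univ.erase i, J (p l) ^ s
            = ∏ l ∈ Finset.univ.erase i, J (p l) ^ (s-1) := by
          rw [hA, ← Finset.prod_mul_distrib]
          exact Finset.prod_congr rfl fun l _ => by
            rw [← ENNReal.rpow_add _ _ (J_ne_zero _) (J_ne_top _),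
              show (-1) + s = s - 1 by ring]
        calc J (∑ l, p l) ^ (s-1) * J (p j) ^ (-2:ℝ) * ∏ l, (v l (p l) : ℝ≥0∞)
            ≤ ((N:ℝ≥0∞) ^ (s-1) *
                (J (p i) ^ (s-3) * ∏ l ∈ Finset.univ.erase i, J (p l) ^ (s-1))) *
              ∏ l, (v l (p l) : ℝ≥0∞) := mul_le_mul_left hw _
          _ = K * (A p * ∏ l, g l (p l)) := by
              rw [e1, show A p * ((J (p i) ^ (s-3) *
                  ∏ l ∈ Finset.univ.erase i, J (p l) ^ s) * ∏ l, (v l (p l) : ℝ≥0∞))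
                = (J (p i) ^ (s-3) * (A p * ∏ l ∈ Finset.univ.erase i, J (p l) ^ s)) *
                  ∏ l, (v l (p l) : ℝ≥0∞) by ring, e2, hK]
              ring
      · rw [if_neg hc]
        exact zero_le
    -- h3 : the constraint sum of A² equals S
    have h3 : ∑' p : Fin N → ℤ, (x p)^(2:ℕ) = S := by
      have hx2 : ∀ p : Fin N → ℤ, (x p)^(2:ℕ) =
          if (∑ j, p j) = k then ∏ l ∈ Finset.univ.erase i, J (p l) ^ (-2:ℝ) else 0 := by
        intro p
        by_cases hc : (∑ j, p j) = k
        · rw [hx]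
          simp only [if_pos hc]
          rw [hA, ← Finset.prod_pow]
          exact Finset.prod_congr rfl fun l _ => by
            rw [← ENNReal.rpow_natCast (J (p l) ^ (-1:ℝ)) 2, ← ENNReal.rpow_mul]
            norm_num
        · rw [hx]
          simp only [if_neg hc]
          simp
      rw [tsum_congr hx2]
      rw [← ((Equiv.funSplitAt i ℤ).symm.tsum_eq
        (fun p : Fin N → ℤ => if (∑ j, p j) = k then
          ∏ l ∈ Finset.univ.erase i, J (p l) ^ (-2:ℝ) else 0)), ENNReal.tsum_prod',
        ENNReal.tsum_comm]
      have hEi : ∀ (a : ℤ) (q : {j : Fin N // j ≠ i} → ℤ),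
          (Equiv.funSplitAt i ℤ).symm (a, q) i = a := by
        intro a q
        simp [Equiv.funSplitAt, Equiv.piSplitAt]
      have hEl : ∀ (a : ℤ) (q : {j : Fin N // j ≠ i} → ℤ) (l : {j : Fin N // j ≠ i}),
          (Equiv.funSplitAt i ℤ).symm (a, q) (l : Fin N) = q l := by
        intro a q l
        simp [Equiv.funSplitAt, Equiv.piSplitAt, l.prop]
      rw [hSdef]
      refine tsum_congr fun q => ?_
      have hsum : ∀ a : ℤ, ∑ j, (Equiv.funSplitAt i ℤ).symm (a, q) j
          = a + ∑ l : {j : Fin N // j ≠ i}, q l := by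
        intro a
        rw [← Finset.add_sum_erase Finset.univ _ (Finset.mem_univ i), hEi]
        congr 1
        rw [Finset.sum_subtype (p := fun j => j ≠ i) (Finset.univ.erase i) (fun x => by simp)
          (fun j => (Equiv.funSplitAt i ℤ).symm (a, q) j)]
        exact Finset.sum_congr rfl fun l _ => hEl a q l
      have hprodq : ∀ a : ℤ, ∏ l ∈ Finset.univ.erase i,
          J ((Equiv.funSplitAt i ℤ).symm (a, q) l) ^ (-2:ℝ)
          = ∏ l : {j : Fin N // j ≠ i}, J (q l) ^ (-2:ℝ) := by
        intro a
        rw [Finset.prod_subtype (p := fun j => j ≠ i) (Finset.univ.erase i) (fun x => by simp)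
          (fun j => J ((Equiv.funSplitAt i ℤ).symm (a, q) j) ^ (-2:ℝ))]
        exact Finset.prod_congr rfl fun l _ => by rw [hEl a q l]
      have hcongr : ∀ a : ℤ,
          (if (∑ j, (Equiv.funSplitAt i ℤ).symm (a, q) j) = k then
            ∏ l ∈ Finset.univ.erase i, J ((Equiv.funSplitAt i ℤ).symm (a, q) l) ^ (-2:ℝ) else 0)
          = (if a = k - ∑ l : {j : Fin N // j ≠ i}, q l then
              ∏ l : {j : Fin N // j ≠ i}, J (q l) ^ (-2:ℝ) else 0) := by
        intro a
        rw [hprodq a, hsum a]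
        exact if_congr (by omega) rfl rfl
      rw [tsum_congr hcongr, tsum_ite_eq]
    -- h4
    have h4 : ∑' p : Fin N → ℤ, (y p)^(2:ℕ) = Y k := by
      rw [hY]
      refine tsum_congr fun p => ?_
      by_cases hc : (∑ j, p j) = k
      · rw [hy]; simp only [if_pos hc]
      · rw [hy]; simp only [if_neg hc]; simp
    -- combine
    have step : (∑' p : Fin N → ℤ, if (∑ j, p j) = k then
        J k ^ (s-1) * (Finset.univ.sup fun j => J (p j)) ^ (-2 : ℝ) *
          ∏ l, (v l (p l) : ℝ≥0∞) else 0)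
        ≤ K * (S ^ ((1:ℝ)/2) * (Y k) ^ ((1:ℝ)/2)) := by
      calc (∑' p : Fin N → ℤ, if (∑ j, p j) = k then
          J k ^ (s-1) * (Finset.univ.sup fun j => J (p j)) ^ (-2 : ℝ) *
            ∏ l, (v l (p l) : ℝ≥0∞) else 0)
          ≤ ∑' p : Fin N → ℤ, K * (x p * y p) := ENNReal.tsum_le_tsum h2
        _ = K * ∑' p : Fin N → ℤ, x p * y p := ENNReal.tsum_mul_left
        _ ≤ K * ((∑' p : Fin N → ℤ, (x p)^(2:ℕ)) ^ ((1:ℝ)/2) *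
            (∑' p : Fin N → ℤ, (y p)^(2:ℕ)) ^ ((1:ℝ)/2)) :=
          mul_le_mul_right (tsum_mul_le_sqrt x y) K
        _ = K * (S ^ ((1:ℝ)/2) * (Y k) ^ ((1:ℝ)/2)) := by rw [h3, h4]
    calc J k ^ (2*s) *
        (∑' p : Fin N → ℤ, if (∑ j, p j) = k then
          J k ^ (-1 : ℝ) * (Finset.univ.sup fun j => J (p j)) ^ (-2 : ℝ) *
            ∏ l, (v l (p l) : ℝ≥0∞) else 0) ^ (2:ℕ)
        = (∑' p : Fin N → ℤ, if (∑ j, p j) = k then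
            J k ^ (s-1) * (Finset.univ.sup fun j => J (p j)) ^ (-2 : ℝ) *
              ∏ l, (v l (p l) : ℝ≥0∞) else 0) ^ (2:ℕ) := h1
      _ ≤ (K * (S ^ ((1:ℝ)/2) * (Y k) ^ ((1:ℝ)/2))) ^ (2:ℕ) := pow_le_pow_left' step 2
      _ = (K ^ (2:ℕ) * S) * Y k := by
          rw [mul_pow, mul_pow, sq_half_rpow, sq_half_rpow]
          ring
  -- total sum of Y
  have hYtotal : ∑' k : ℤ, Y k = ∏ l, D l := by
    rw [hY]
    rw [ENNReal.tsum_comm]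
    have hinner : ∀ p : Fin N → ℤ,
        (∑' k : ℤ, if (∑ j, p j) = k then (∏ l, g l (p l))^(2:ℕ) else 0)
        = ∏ l, (g l (p l))^(2:ℕ) := by
      intro p
      have : ∀ k : ℤ, (if (∑ j, p j) = k then (∏ l, g l (p l))^(2:ℕ) else 0)
          = (if k = (∑ j, p j) then (∏ l, g l (p l))^(2:ℕ) else 0) := fun k =>
        if_congr eq_comm rfl rfl
      rw [tsum_congr this, tsum_ite_eq, ← Finset.prod_pow]
    rw [tsum_congr hinner, tsum_pi_prod (fun l m => (g l m)^(2:ℕ))]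
    refine Finset.prod_congr rfl fun l _ => ?_
    rw [hD, hg]
    refine tsum_congr fun m => ?_
    rw [mul_pow]
    congr 1
    rw [← ENNReal.rpow_natCast (J m ^ (if l = i then s-3 else s)) 2, ← ENNReal.rpow_mul]
    norm_num [mul_comm]
  -- conclude
  have hDi : D i = ∑' k : ℤ, J k ^ (2 * (s - 3)) * (v i k : ℝ≥0∞) ^ (2:ℕ) := by
    rw [hD]; simp
  have hDl : ∀ l ∈ Finset.univ.erase i,
      (D l) ^ ((1:ℝ)/2) = (∑' k : ℤ, J k ^ (2 * s) * (v l k : ℝ≥0∞) ^ (2:ℕ)) ^ ((1:ℝ)/2) := by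
    intro l hl
    rw [hD]
    simp [(Finset.mem_erase.1 hl).1]
  calc (∑' k : ℤ, J k ^ (2 * s) *
        (∑' p : Fin N → ℤ, if (∑ j, p j) = k then
          J k ^ (-1 : ℝ) * (Finset.univ.sup fun j => J (p j)) ^ (-2 : ℝ) *
            ∏ l, (v l (p l) : ℝ≥0∞) else 0) ^ (2:ℕ)) ^ ((1:ℝ)/2)
      ≤ (∑' k : ℤ, (K ^ (2:ℕ) * S) * Y k) ^ ((1:ℝ)/2) :=
        ENNReal.rpow_le_rpow (ENNReal.tsum_le_tsum main) (by norm_num)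
    _ = ((K ^ (2:ℕ) * S) * ∏ l, D l) ^ ((1:ℝ)/2) := by rw [ENNReal.tsum_mul_left, hYtotal]
    _ = T * (∏ l, D l) ^ ((1:ℝ)/2) := by
        rw [ENNReal.mul_rpow_of_nonneg _ _ (by norm_num : (0:ℝ) ≤ 1/2), hT]
    _ = T * ((D i) ^ ((1:ℝ)/2) * ∏ l ∈ Finset.univ.erase i, (D l) ^ ((1:ℝ)/2)) := by
        rw [← ENNReal.prod_rpow_of_nonneg (by norm_num : (0:ℝ) ≤ 1/2),
          ← Finset.mul_prod_erase Finset.univ (fun l => (D l) ^ ((1:ℝ)/2)) (Finset.mem_univ i)]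
    _ = T * ((∑' k : ℤ, J k ^ (2 * (s - 3)) * (v i k : ℝ≥0∞) ^ (2:ℕ)) ^ ((1:ℝ)/2) *
          ∏ l ∈ Finset.univ.erase i,
            (∑' k : ℤ, J k ^ (2 * s) * (v l k : ℝ≥0∞) ^ (2:ℕ)) ^ ((1:ℝ)/2)) := by
        rw [hDi, Finset.prod_congr rfl hDl]
    _ ≤ ENNReal.ofReal (T.toReal + 1) * _ := mul_le_mul_left hTC _
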